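/- Let J be an ideal of S = K[x_1,...,x_n] with a fixed monomial order, and let (E_i)_{i∈Λ} be a family of monomial ideals of S such that in(J + E_i) = in(J) + E_i for all i ∈ Λ. Set E = ⋂_{i∈Λ} E_i. Then in(J + E) = in(J) + E and ⋂_{i∈Λ}(J + E_i) = J + E. -/

import Mathlib

open MvPolynomial

variable {K : Type*} [Field K] {n : ℕ}

/-- The leading monomial (exponent vector) of a polynomial with respect to a monomial
order `m`: the maximum of the support; by convention `lm m 0 = 0`. -/
noncomputable def lm (m : MonomialOrder (Fin n)) (f : MvPolynomial (Fin n) K) :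
    Fin n →₀ ℕ :=
  m.toSyn.symm (f.support.sup fun d => m.toSyn d)

/-- The initial ideal of `I`: the ideal generated by the leading monomials of the
nonzero elements of `I`. -/
noncomputable def initialIdeal (m : MonomialOrder (Fin n))
    (I : Ideal (MvPolynomial (Fin n) K)) : Ideal (MvPolynomial (Fin n) K) :=
  Ideal.span {p | ∃ f ∈ I, f ≠ 0 ∧ p = monomial (lm m f) (1 : K)}

/-- `G` is a Gröbner basis of `I`: a finite set of nonzero polynomials generating `I`
whose leading monomials generate the initial ideal of `I`. -/
def IsGroebnerBasis (m : MonomialOrder (Fin n)) (I : Ideal (MvPolynomial (Fin n) K))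
    (G : Set (MvPolynomial (Fin n) K)) : Prop :=
  G.Finite ∧ (0 : MvPolynomial (Fin n) K) ∉ G ∧ Ideal.span G = I ∧
    Ideal.span ((fun g => monomial (lm m g) (1 : K)) '' G) = initialIdeal m I

/-- The S-polynomial `S(f,g)` with respect to the monomial order `m`. -/
noncomputable def sPoly (m : MonomialOrder (Fin n)) (f g : MvPolynomial (Fin n) K) :
    MvPolynomial (Fin n) K :=
  monomial (lm m f ⊔ lm m g - lm m f) (f.coeff (lm m f))⁻¹ * f -
    monomial (lm m f ⊔ lm m g - lm m g) (g.coeff (lm m g))⁻¹ * g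

/-- An ideal is a monomial ideal if it is generated by monomials. -/
def IsMonomialIdeal (I : Ideal (MvPolynomial (Fin n) K)) : Prop :=
  ∃ M : Set (Fin n →₀ ℕ), I = Ideal.span ((fun μ => (monomial μ (1 : K))) '' M)

section Aux

variable (m : MonomialOrder (Fin n))

lemma toSyn_lm (f : MvPolynomial (Fin n) K) :
    m.toSyn (lm m f) = f.support.sup fun d => m.toSyn d := by
  simp [lm]

lemma lm_mem_support {f : MvPolynomial (Fin n) K} (hf : f ≠ 0) : lm m f ∈ f.support := by
  obtain ⟨b, hb, hb'⟩ := Finset.exists_mem_eq_sup f.support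
    (MvPolynomial.support_nonempty.mpr hf) (fun d => m.toSyn d)
  have : lm m f = b := by rw [lm, hb', AddEquiv.symm_apply_apply]
  rwa [this]

lemma coeff_lm_ne_zero {f : MvPolynomial (Fin n) K} (hf : f ≠ 0) :
    f.coeff (lm m f) ≠ 0 :=
  MvPolynomial.mem_support_iff.mp (lm_mem_support m hf)

lemma le_toSyn_lm {f : MvPolynomial (Fin n) K} {d : Fin n →₀ ℕ} (hd : d ∈ f.support) :
    m.toSyn d ≤ m.toSyn (lm m f) := by
  rw [toSyn_lm]
  exact Finset.le_sup hd

lemma lm_eq_of {f : MvPolynomial (Fin n) K} {μ : Fin n →₀ ℕ} (h1 : μ ∈ f.support)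
    (h2 : ∀ d ∈ f.support, m.toSyn d ≤ m.toSyn μ) : lm m f = μ := by
  apply m.toSyn.injective
  apply le_antisymm
  · rw [toSyn_lm]
    exact Finset.sup_le h2
  · exact le_toSyn_lm m h1

lemma lm_monomial {μ : Fin n →₀ ℕ} {c : K} (hc : c ≠ 0) : lm m (monomial μ c) = μ := by
  apply lm_eq_of
  · simp [MvPolynomial.mem_support_iff, hc]
  · intro d hd
    have : μ = d := by
      by_contra hne
      exact (MvPolynomial.mem_support_iff.mp hd) (by simp [MvPolynomial.coeff_monomial, hne])
    simp [this]

lemma lm_monomial_mul {g : MvPolynomial (Fin n) K} {c : K} (hc : c ≠ 0) (hg : g ≠ 0)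
    (δ : Fin n →₀ ℕ) : lm m (monomial δ c * g) = δ + lm m g := by
  apply lm_eq_of
  · rw [MvPolynomial.mem_support_iff, MvPolynomial.coeff_monomial_mul]
    exact mul_ne_zero hc (coeff_lm_ne_zero m hg)
  · intro d hd
    rw [MvPolynomial.mem_support_iff, MvPolynomial.coeff_monomial_mul'] at hd
    by_cases hle : δ ≤ d
    · rw [if_pos hle] at hd
      have hmem : d - δ ∈ g.support := by
        rw [MvPolynomial.mem_support_iff]
        intro h0
        exact hd (by rw [h0, mul_zero])
      calc m.toSyn d = m.toSyn δ + m.toSyn (d - δ) := by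
            rw [← map_add, add_tsub_cancel_of_le hle]
        _ ≤ m.toSyn δ + m.toSyn (lm m g) := add_le_add_right (le_toSyn_lm m hmem) _
        _ = m.toSyn (δ + lm m g) := (map_add _ _ _).symm
    · rw [if_neg hle] at hd
      exact absurd rfl hd

lemma initialIdeal_eq_span (I : Ideal (MvPolynomial (Fin n) K)) :
    initialIdeal m I =
      Ideal.span ((fun μ => monomial μ (1 : K)) '' (lm m '' {f | f ∈ I ∧ f ≠ 0})) := by
  unfold initialIdeal
  congr 1
  ext p
  constructor
  · rintro ⟨f, hf, h0, rfl⟩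
    exact ⟨lm m f, ⟨f, ⟨hf, h0⟩, rfl⟩, rfl⟩
  · rintro ⟨μ, ⟨f, ⟨hf, h0⟩, rfl⟩, rfl⟩
    exact ⟨f, hf, h0, rfl⟩

lemma monomial_mem_span_iff {S : Set (Fin n →₀ ℕ)} {μ : Fin n →₀ ℕ} :
    (monomial μ (1 : K)) ∈ Ideal.span ((fun ν => monomial ν (1 : K)) '' S) ↔
      ∃ ν ∈ S, ν ≤ μ := by
  rw [mem_ideal_span_monomial_image]
  constructor
  · intro hh
    exact hh μ (by simp [MvPolynomial.mem_support_iff])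
  · intro hh ν hν
    have : μ = ν := by
      by_contra hne
      exact (MvPolynomial.mem_support_iff.mp hν) (by simp [MvPolynomial.coeff_monomial, hne])
    rw [← this]
    exact hh

lemma exists_of_monomial_mem_initialIdeal {I : Ideal (MvPolynomial (Fin n) K)}
    {μ : Fin n →₀ ℕ} (hmem : monomial μ (1 : K) ∈ initialIdeal m I) :
    ∃ g ∈ I, g ≠ 0 ∧ ∃ δ, lm m g + δ = μ := by
  rw [initialIdeal_eq_span, monomial_mem_span_iff] at hmem
  obtain ⟨ν, ⟨g, ⟨hgI, hg0⟩, rfl⟩, hle⟩ := hmem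
  exact ⟨g, hgI, hg0, μ - lm m g, add_tsub_cancel_of_le hle⟩

lemma monomial_lm_mem {I : Ideal (MvPolynomial (Fin n) K)} {f : MvPolynomial (Fin n) K}
    (hf : f ∈ I) (h0 : f ≠ 0) : monomial (lm m f) (1 : K) ∈ initialIdeal m I :=
  Ideal.subset_span ⟨f, hf, h0, rfl⟩

lemma initialIdeal_mono {I J : Ideal (MvPolynomial (Fin n) K)} (hIJ : I ≤ J) :
    initialIdeal m I ≤ initialIdeal m J :=
  Ideal.span_mono (by rintro p ⟨f, hf, h0, rfl⟩; exact ⟨f, hIJ hf, h0, rfl⟩)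

lemma isMonomialIdeal_initialIdeal (I : Ideal (MvPolynomial (Fin n) K)) :
    IsMonomialIdeal (initialIdeal m I) :=
  ⟨lm m '' {f | f ∈ I ∧ f ≠ 0}, initialIdeal_eq_span m I⟩

lemma IsMonomialIdeal.mem_iff' {E : Ideal (MvPolynomial (Fin n) K)} (hE : IsMonomialIdeal E)
    {f : MvPolynomial (Fin n) K} :
    f ∈ E ↔ ∀ μ ∈ f.support, (monomial μ (1 : K)) ∈ E := by
  obtain ⟨M, rfl⟩ := hE
  constructor
  · intro hf μ hμ
    rw [mem_ideal_span_monomial_image] at hf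
    rw [monomial_mem_span_iff]
    exact hf μ hμ
  · intro hh
    rw [mem_ideal_span_monomial_image]
    intro μ hμ
    exact monomial_mem_span_iff.mp (hh μ hμ)

lemma IsMonomialIdeal.add' {A B : Ideal (MvPolynomial (Fin n) K)} (hA : IsMonomialIdeal A)
    (hB : IsMonomialIdeal B) : IsMonomialIdeal (A + B) := by
  obtain ⟨MA, rfl⟩ := hA
  obtain ⟨MB, rfl⟩ := hB
  exact ⟨MA ∪ MB, by rw [Set.image_union, Ideal.span_union, Submodule.add_eq_sup]⟩

lemma IsMonomialIdeal.iInf' {ι : Type*} {E : ι → Ideal (MvPolynomial (Fin n) K)}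
    (hE : ∀ i, IsMonomialIdeal (E i)) : IsMonomialIdeal (⨅ i, E i) := by
  refine ⟨{μ | monomial μ (1 : K) ∈ ⨅ i, E i}, le_antisymm ?_ ?_⟩
  · intro f hf
    rw [mem_ideal_span_monomial_image]
    intro μ hμ
    refine ⟨μ, ?_, le_rfl⟩
    rw [Set.mem_setOf_eq, Submodule.mem_iInf]
    intro i
    exact ((hE i).mem_iff'.mp (Submodule.mem_iInf E |>.mp hf i)) μ hμ
  · rw [Ideal.span_le]
    rintro p ⟨μ, hμ, rfl⟩
    exact hμ

lemma monomial_mem_add_iff {A B : Ideal (MvPolynomial (Fin n) K)} (hA : IsMonomialIdeal A)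
    (hB : IsMonomialIdeal B) {μ : Fin n →₀ ℕ} :
    monomial μ (1 : K) ∈ A + B ↔ monomial μ (1 : K) ∈ A ∨ monomial μ (1 : K) ∈ B := by
  obtain ⟨MA, rfl⟩ := hA
  obtain ⟨MB, rfl⟩ := hB
  rw [show Ideal.span ((fun ν => monomial ν (1 : K)) '' MA) +
      Ideal.span ((fun ν => monomial ν (1 : K)) '' MB) =
      Ideal.span ((fun ν => monomial ν (1 : K)) '' (MA ∪ MB)) by
    rw [Set.image_union, Ideal.span_union, Submodule.add_eq_sup]]
  rw [monomial_mem_span_iff, monomial_mem_span_iff, monomial_mem_span_iff]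
  constructor
  · rintro ⟨ν, hν | hν, hle⟩
    · exact Or.inl ⟨ν, hν, hle⟩
    · exact Or.inr ⟨ν, hν, hle⟩
  · rintro (⟨ν, hν, hle⟩ | ⟨ν, hν, hle⟩)
    · exact ⟨ν, Or.inl hν, hle⟩
    · exact ⟨ν, Or.inr hν, hle⟩

lemma monomialIdeal_le_initialIdeal {E J : Ideal (MvPolynomial (Fin n) K)}
    (hE : IsMonomialIdeal E) : E ≤ initialIdeal m (J + E) := by
  obtain ⟨M, hM⟩ := hE
  rw [hM, Ideal.span_le]
  rintro p ⟨μ, hμ, rfl⟩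
  apply Ideal.subset_span
  simp only [Set.mem_setOf_eq]
  refine ⟨monomial μ (1 : K), ?_, ?_, ?_⟩
  · rw [Submodule.add_eq_sup]
    exact Submodule.mem_sup_right (Ideal.subset_span ⟨μ, hμ, rfl⟩)
  · simp [MvPolynomial.monomial_eq_zero]
  · rw [lm_monomial m one_ne_zero]

lemma le_of_initial_le {I J : Ideal (MvPolynomial (Fin n) K)} (hJI : J ≤ I)
    (hin : initialIdeal m I ≤ initialIdeal m J) : I ≤ J := by
  have H : ∀ s : m.syn, ∀ f, f ∈ I → m.toSyn (lm m f) = s → f ∈ J := by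
    intro s
    induction s using WellFoundedLT.induction with
    | _ s ih =>
      intro f hf hs
      by_cases h0 : f = 0
      · rw [h0]; exact J.zero_mem
      · obtain ⟨g, hgJ, hg0, δ, hδ⟩ :=
          exists_of_monomial_mem_initialIdeal m (hin (monomial_lm_mem m hf h0))
        set c := f.coeff (lm m f) / g.coeff (lm m g) with hc_def
        have hc : c ≠ 0 := div_ne_zero (coeff_lm_ne_zero m h0) (coeff_lm_ne_zero m hg0)
        set g' := monomial δ c * g with hg'_def
        have hg'J : g' ∈ J := Ideal.mul_mem_left _ _ hgJ
        have hlm' : lm m g' = lm m f := by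
          rw [hg'_def, lm_monomial_mul m hc hg0, ← hδ, add_comm]
        have hadd : δ + lm m g = lm m f := by rw [add_comm]; exact hδ
        have hcoeff : g'.coeff (lm m f) = f.coeff (lm m f) := by
          calc g'.coeff (lm m f) = c * g.coeff (lm m g) := by
                rw [hg'_def, ← hadd, MvPolynomial.coeff_monomial_mul]
            _ = f.coeff (lm m f) := by
                rw [hc_def, div_mul_cancel₀ _ (coeff_lm_ne_zero m hg0)]
        by_cases hfg : f = g'
        · rw [hfg]; exact hg'J
        · have hne : f - g' ≠ 0 := sub_ne_zero.mpr hfg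
          have hsub : f - g' ∈ I := I.sub_mem hf (hJI hg'J)
          have hlt : m.toSyn (lm m (f - g')) < s := by
            rw [← hs]
            have hdsupp := lm_mem_support m hne
            have hnotlm : lm m (f - g') ≠ lm m f := by
              intro heq
              have : (f - g').coeff (lm m f) = 0 := by
                rw [MvPolynomial.coeff_sub, hcoeff, sub_self]
              rw [heq] at hdsupp
              exact (MvPolynomial.mem_support_iff.mp hdsupp) this
            have hle : m.toSyn (lm m (f - g')) ≤ m.toSyn (lm m f) := by
              have hd := MvPolynomial.mem_support_iff.mp hdsupp
              rw [MvPolynomial.coeff_sub] at hd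
              by_cases hdf : lm m (f - g') ∈ f.support
              · exact le_toSyn_lm m hdf
              · have : lm m (f - g') ∈ g'.support := by
                  rw [MvPolynomial.mem_support_iff]
                  intro h0'
                  rw [h0', sub_zero] at hd
                  exact hd (by simpa using MvPolynomial.notMem_support_iff.mp hdf)
                calc m.toSyn (lm m (f - g')) ≤ m.toSyn (lm m g') := le_toSyn_lm m this
                  _ = m.toSyn (lm m f) := by rw [hlm']
            exact lt_of_le_of_ne hle fun hh => hnotlm (m.toSyn.injective hh)
          have hmem := ih _ hlt (f - g') hsub rfl
          have : f = (f - g') + g' := by ring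
          rw [this]
          exact J.add_mem hmem hg'J
  exact fun f hf => H _ f hf rfl

end Aux

/-- For a family of monomial ideals `E i` with `in(J + E i) = in(J) + E i`, setting
`E = ⋂ E i` one has `in(J + E) = in(J) + E` and `⋂ (J + E i) = J + E`. -/
theorem stmt12 (m : MonomialOrder (Fin n)) (J : Ideal (MvPolynomial (Fin n) K))
    {ι : Type*} (E : ι → Ideal (MvPolynomial (Fin n) K))
    (hmono : ∀ i, IsMonomialIdeal (E i))
    (h : ∀ i, initialIdeal m (J + E i) = initialIdeal m J + E i) :
    initialIdeal m (J + ⨅ i, E i) = initialIdeal m J + ⨅ i, E i ∧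
      (⨅ i, (J + E i)) = J + ⨅ i, E i := by
  classical
  have hF : IsMonomialIdeal (⨅ i, E i) := IsMonomialIdeal.iInf' hmono
  have hinJ : IsMonomialIdeal (initialIdeal m J) := isMonomialIdeal_initialIdeal m J
  have htgt : IsMonomialIdeal (initialIdeal m J + ⨅ i, E i) := hinJ.add' hF
  have hJle : ∀ i, J + ⨅ i, E i ≤ J + E i := by
    intro i
    simp only [Submodule.add_eq_sup]
    exact sup_le_sup_left (iInf_le E i) J
  -- key step : anything lying in all the `initialIdeal m J + E i` lies in
  -- `initialIdeal m J + ⨅ i, E i`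
  have key : ∀ f : MvPolynomial (Fin n) K, (∀ i, f ∈ initialIdeal m J + E i) →
      f ∈ initialIdeal m J + ⨅ i, E i := by
    intro f hf
    rw [htgt.mem_iff']
    intro μ hμ
    have hfi : ∀ i, monomial μ (1 : K) ∈ initialIdeal m J + E i := fun i =>
      ((hinJ.add' (hmono i)).mem_iff'.mp (hf i)) μ hμ
    by_cases hJ' : monomial μ (1 : K) ∈ initialIdeal m J
    · exact (monomial_mem_add_iff hinJ hF).mpr (Or.inl hJ')
    · refine (monomial_mem_add_iff hinJ hF).mpr (Or.inr ?_)
      rw [Submodule.mem_iInf]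
      intro i
      rcases (monomial_mem_add_iff hinJ (hmono i)).mp (hfi i) with hh | hh
      · exact absurd hh hJ'
      · exact hh
  have hpart1 : initialIdeal m (J + ⨅ i, E i) = initialIdeal m J + ⨅ i, E i := by
    apply le_antisymm
    · intro f hf
      apply key
      intro i
      have : f ∈ initialIdeal m (J + E i) := initialIdeal_mono m (hJle i) hf
      rwa [h i] at this
    · rw [Submodule.add_eq_sup]
      apply sup_le
      · apply initialIdeal_mono
        rw [Submodule.add_eq_sup]
        exact le_sup_left
      · exact monomialIdeal_le_initialIdeal m hF
  refine ⟨hpart1, ?_⟩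
  apply le_antisymm
  · apply le_of_initial_le m (le_iInf fun i => hJle i)
    rw [hpart1]
    intro f hf
    apply key
    intro i
    have : f ∈ initialIdeal m (J + E i) :=
      initialIdeal_mono m (iInf_le (fun i => J + E i) i) hf
    rwa [h i] at this
  · exact le_iInf fun i => hJle i
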